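/- Let ⟨Q, A, δ, F⟩ be a transitive group automaton and k ∈ ℕ, and form the k-digit buffered automaton with state set Q × A^k where on input a: if δ(q,a) ∉ F then (q,w) ↦ (δ(q,a), w), and if δ(q,a) ∈ F then (q,w) ↦ (δ(q,a), w[2..k]a). Then from any buffered state (q, w) with q ∈ F, and for any target word u = a_1⋯a_k ∈ A^k, there is a finite input word leading from (q, w) to some state whose second coordinate is exactly u. In particular every word of A^k appears as the buffer content of some state reachable from (q,w). -/

import Mathlib

/-- Shift the buffer word `w ∈ A^k` left by one position and append `a`
(i.e. `w[2..k]a`). -/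
def shiftPush {A : Type*} {k : ℕ} (w : Fin k → A) (a : A) : Fin k → A :=
  fun i => if h : (i : ℕ) + 1 < k then w ⟨(i : ℕ) + 1, h⟩ else a

/-- One step of the `k`-digit buffered automaton built over the DFA `M`: on input `a`,
`(q, w) ↦ (δ(q,a), w)` if `δ(q,a) ∉ F`, and `(q, w) ↦ (δ(q,a), w[2..k]a)` if
`δ(q,a) ∈ F`. -/
def bstep {A Q : Type*} (M : DFA A Q) [DecidablePred (· ∈ M.accept)] (k : ℕ) :
    Q × (Fin k → A) → A → Q × (Fin k → A) :=
  fun s a =>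
    if M.step s.1 a ∈ M.accept then (M.step s.1 a, shiftPush s.2 a)
    else (M.step s.1 a, s.2)

/-- States reachable from `p` via runs never visiting the accept set (after time 0). -/
inductive NReach {A Q : Type*} (M : DFA A Q) (p : Q) : Q → Prop
  | refl : NReach M p p
  | step {r : Q} (a : A) : NReach M p r → M.step r a ∉ M.accept → NReach M p (M.step r a)

lemma gadget {A Q : Type*} [Fintype Q] (M : DFA A Q)
    (hG : ∀ a : A, Function.Injective (fun q => M.step q a))
    {p : Q} (hp : p ∈ M.accept) (a : A) :
    ∃ r, NReach M p r ∧ M.step r a ∈ M.accept := by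
  by_contra h
  push_neg at h
  have hcl : ∀ r, NReach M p r → NReach M p (M.step r a) :=
    fun r hr => NReach.step a hr (h r hr)
  let f : {r // NReach M p r} → {r // NReach M p r} := fun x => ⟨M.step x.1 a, hcl x.1 x.2⟩
  have hfInj : Function.Injective f := by
    intro x y hxy
    exact Subtype.ext (hG a (congrArg Subtype.val hxy))
  have hfSurj : Function.Surjective f :=
    (Finite.injective_iff_surjective).mp hfInj
  obtain ⟨⟨r, hr⟩, hfr⟩ := hfSurj ⟨p, NReach.refl⟩
  have hr' : M.step r a = p := congrArg Subtype.val hfr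
  exact h r hr (hr' ▸ hp)

lemma nreach_foldl {A Q : Type*} (M : DFA A Q) [DecidablePred (· ∈ M.accept)]
    (k : ℕ) {p r : Q} (h : NReach M p r) (w : Fin k → A) :
    ∃ inp : List A, List.foldl (bstep M k) (p, w) inp = (r, w) := by
  induction h with
  | refl => exact ⟨[], rfl⟩
  | step a hr hna ih =>
    obtain ⟨inp, hinp⟩ := ih
    refine ⟨inp ++ [a], ?_⟩
    rw [List.foldl_append, hinp]
    simp [bstep, hna]

lemma push_one {A Q : Type*} [Fintype Q] (M : DFA A Q) [DecidablePred (· ∈ M.accept)]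
    (hG : ∀ a : A, Function.Injective (fun q => M.step q a))
    (k : ℕ) {p : Q} (hp : p ∈ M.accept) (a : A) (w : Fin k → A) :
    ∃ (inp : List A) (p' : Q), p' ∈ M.accept ∧
      List.foldl (bstep M k) (p, w) inp = (p', shiftPush w a) := by
  obtain ⟨r, hr, hra⟩ := gadget M hG hp a
  obtain ⟨inp, hinp⟩ := nreach_foldl M k hr w
  refine ⟨inp ++ [a], M.step r a, hra, ?_⟩
  rw [List.foldl_append, hinp]
  simp [bstep, hra]

lemma push_list {A Q : Type*} [Fintype Q] (M : DFA A Q) [DecidablePred (· ∈ M.accept)]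
    (hG : ∀ a : A, Function.Injective (fun q => M.step q a))
    (k : ℕ) (l : List A) : ∀ {p : Q}, p ∈ M.accept → ∀ w : Fin k → A,
    ∃ (inp : List A) (p' : Q), p' ∈ M.accept ∧
      List.foldl (bstep M k) (p, w) inp = (p', List.foldl shiftPush w l) := by
  induction l with
  | nil => exact fun hp w => ⟨[], _, hp, rfl⟩
  | cons a l ih =>
    intro p hp w
    obtain ⟨inp1, p1, hp1, h1⟩ := push_one M hG k hp a w
    obtain ⟨inp2, p2, hp2, h2⟩ := ih hp1 (shiftPush w a)
    exact ⟨inp1 ++ inp2, p2, hp2, by rw [List.foldl_append, h1]; exact h2⟩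

lemma foldl_shiftPush {A : Type*} {k : ℕ} (l : List A) : ∀ (w : Fin k → A) (i : Fin k),
    (List.foldl shiftPush w l) i =
      if h : (i : ℕ) + l.length < k then w ⟨(i : ℕ) + l.length, h⟩
      else l.get ⟨(i : ℕ) + l.length - k, by have := i.isLt; omega⟩ := by
  induction l with
  | nil =>
    intro w i
    simp
  | cons a l ih =>
    intro w i
    rw [List.foldl_cons, ih (shiftPush w a) i]
    by_cases h1 : (i : ℕ) + l.length < k
    · rw [dif_pos h1]
      show shiftPush w a _ = _
      unfold shiftPush
      by_cases h2 : (i : ℕ) + l.length + 1 < k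
      · rw [dif_pos h2, dif_pos (by simp only [List.length_cons]; omega)]
        exact congrArg w (Fin.ext (by simp only [List.length_cons]; omega))
      · rw [dif_neg h2, dif_neg (by simp only [List.length_cons]; omega)]
        have h3 : (i : ℕ) + (l.length + 1) - k = 0 := by omega
        simp [h3]
    · rw [dif_neg h1, dif_neg (by simp; omega)]
      have : (i : ℕ) + (a :: l).length - k = ((i : ℕ) + l.length - k) + 1 := by simp; omega
      simp only [this, List.get_cons_succ]

/-- in the `k`-digit buffered automaton over a transitive group automaton,
from any buffered state `(q, w)` with `q` final and for any target word `u ∈ A^k`,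
some finite input word leads from `(q, w)` to a state whose buffer content is exactly
`u`. -/
theorem buffer_reaches_any_word {A Q : Type*} [Fintype Q] (M : DFA A Q)
    [DecidablePred (· ∈ M.accept)]
    (hG : ∀ a : A, Function.Bijective (fun q => M.step q a))
    (htrans : ∀ p q : Q, ∃ u : List A, M.evalFrom p u = q)
    (k : ℕ) (q : Q) (hq : q ∈ M.accept) (w : Fin k → A) (u : Fin k → A) :
    ∃ inp : List A, (List.foldl (bstep M k) (q, w) inp).2 = u := by
  have hInj : ∀ a : A, Function.Injective (fun q => M.step q a) := fun a => (hG a).1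
  obtain ⟨inp, p', hp', h⟩ := push_list M hInj k (List.ofFn u) hq w
  refine ⟨inp, ?_⟩
  rw [h]
  show List.foldl shiftPush w (List.ofFn u) = u
  funext i
  rw [foldl_shiftPush]
  rw [dif_neg (by simp)]
  have hidx : (i : ℕ) + (List.ofFn u).length - k = (i : ℕ) := by simp
  simp [List.get_ofFn, hidx]
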